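/- Let Γ be an m×m real symmetric positive definite matrix, Γ_n an n×n real symmetric positive definite matrix, H an n×m real matrix, X an m×p real matrix, and y ∈ ℝⁿ. Define J(s, β) := ½ (y − H s)ᵀ Γ_n⁻¹ (y − H s) + ½ (s − X β)ᵀ Γ⁻¹ (s − X β). Suppose ξ̂ ∈ ℝⁿ and β̂ ∈ ℝᵖ satisfy the saddle-point system (H Γ Hᵀ + Γ_n) ξ̂ + H X β̂ = y and (H X)ᵀ ξ̂ = 0, and set ŝ := X β̂ + Γ Hᵀ ξ̂. Then (ŝ, β̂) is a global minimizer of J: for all s ∈ ℝ^m and β ∈ ℝᵖ, J(ŝ, β̂) ≤ J(s, β). -/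

import Mathlib

open Matrix

lemma quad_expand {k : ℕ} (M : Matrix (Fin k) (Fin k) ℝ) (hM : M.PosDef) (c d : Fin k → ℝ) :
    (M *ᵥ c + d) ⬝ᵥ (M⁻¹ *ᵥ (M *ᵥ c + d)) =
      c ⬝ᵥ (M *ᵥ c) + 2 * (d ⬝ᵥ c) + d ⬝ᵥ (M⁻¹ *ᵥ d) := by
  have hdet : IsUnit M.det := isUnit_iff_ne_zero.mpr hM.det_pos.ne'
  have hinv : M⁻¹ *ᵥ (M *ᵥ c) = c := by
    rw [mulVec_mulVec, Matrix.nonsing_inv_mul _ hdet, one_mulVec]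
  have hsymm : (M⁻¹)ᵀ = M⁻¹ := by
    have := hM.inv.isHermitian
    simpa [Matrix.IsHermitian, conjTranspose_eq_transpose_of_trivial] using this
  have key : (M *ᵥ c) ⬝ᵥ (M⁻¹ *ᵥ d) = c ⬝ᵥ d := by
    rw [dotProduct_mulVec]
    have : (M *ᵥ c) ᵥ* M⁻¹ = c := by
      rw [← mulVec_transpose, hsymm, hinv]
    rw [this]
  rw [mulVec_add, hinv, add_dotProduct, dotProduct_add, dotProduct_add, key,
    dotProduct_comm (M *ᵥ c) c, dotProduct_comm c d]
  ring

lemma psd_inv_nonneg {k : ℕ} (M : Matrix (Fin k) (Fin k) ℝ) (hM : M.PosDef)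
    (x : Fin k → ℝ) : 0 ≤ x ⬝ᵥ (M⁻¹ *ᵥ x) := by
  have := hM.inv.posSemidef.re_dotProduct_nonneg x
  simpa using this

/-- the `ξ–β` saddle-point system yields the MAP estimate: if
`(H Γ Hᵀ + Γ_n) ξ + H X βhat = y`, `(H X)ᵀ ξ = 0` and `shat = X βhat + Γ Hᵀ ξ`,
then `(shat, βhat)` globally minimizes the negative log posterior
`J(s, β) = ½‖y − Hs‖²_{Γ_n⁻¹} + ½‖s − Xβ‖²_{Γ⁻¹}`. -/
theorem stmt_16 {m n p : ℕ} (Γ : Matrix (Fin m) (Fin m) ℝ)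
    (Γn : Matrix (Fin n) (Fin n) ℝ) (H : Matrix (Fin n) (Fin m) ℝ)
    (X : Matrix (Fin m) (Fin p) ℝ) (y : Fin n → ℝ)
    (hΓ : Γ.PosDef) (hΓn : Γn.PosDef)
    (J : (Fin m → ℝ) → (Fin p → ℝ) → ℝ)
    (hJ : ∀ s β, J s β =
      (1 / 2) * ((y - H *ᵥ s) ⬝ᵥ (Γn⁻¹ *ᵥ (y - H *ᵥ s))) +
      (1 / 2) * ((s - X *ᵥ β) ⬝ᵥ (Γ⁻¹ *ᵥ (s - X *ᵥ β))))
    (ξ : Fin n → ℝ) (βhat : Fin p → ℝ)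
    (hsys1 : (H * Γ * Hᵀ + Γn) *ᵥ ξ + (H * X) *ᵥ βhat = y)
    (hsys2 : (H * X)ᵀ *ᵥ ξ = 0)
    (shat : Fin m → ℝ) (hshat : shat = X *ᵥ βhat + Γ *ᵥ (Hᵀ *ᵥ ξ)) :
    ∀ (s : Fin m → ℝ) (β : Fin p → ℝ), J shat βhat ≤ J s β := by
  intro s β
  set u : Fin m → ℝ := s - shat with hu
  set v : Fin p → ℝ := β - βhat with hv
  -- y as a sum
  have hy : y = Γn *ᵥ ξ + H *ᵥ shat := by
    rw [hshat, ← hsys1]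
    simp only [add_mulVec, mulVec_add, mulVec_mulVec, Matrix.mul_assoc]
    abel
  have h1 : y - H *ᵥ s = Γn *ᵥ ξ + (-(H *ᵥ u)) := by
    rw [hy, hu, mulVec_sub]
    abel
  have h1hat : y - H *ᵥ shat = Γn *ᵥ ξ + 0 := by
    rw [hy]; abel
  have h2 : s - X *ᵥ β = Γ *ᵥ (Hᵀ *ᵥ ξ) + (u - X *ᵥ v) := by
    rw [hu, hv, hshat, mulVec_sub]
    abel
  have h2hat : shat - X *ᵥ βhat = Γ *ᵥ (Hᵀ *ᵥ ξ) + 0 := by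
    rw [hshat]; abel
  rw [hJ, hJ, h1, h2, h1hat, h2hat,
    quad_expand Γn hΓn ξ (-(H *ᵥ u)), quad_expand Γ hΓ (Hᵀ *ᵥ ξ) (u - X *ᵥ v),
    quad_expand Γn hΓn ξ 0, quad_expand Γ hΓ (Hᵀ *ᵥ ξ) 0]
  -- cross terms cancel
  have hcross : (-(H *ᵥ u)) ⬝ᵥ ξ + (u - X *ᵥ v) ⬝ᵥ (Hᵀ *ᵥ ξ) = 0 := by
    have e1 : (H *ᵥ u) ⬝ᵥ ξ = u ⬝ᵥ (Hᵀ *ᵥ ξ) := by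
      rw [dotProduct_comm, dotProduct_mulVec, ← mulVec_transpose, dotProduct_comm]
    have e2 : (X *ᵥ v) ⬝ᵥ (Hᵀ *ᵥ ξ) = 0 := by
      rw [dotProduct_comm, dotProduct_mulVec, ← mulVec_transpose, mulVec_mulVec,
        ← transpose_mul, hsys2]
      simp
    rw [sub_dotProduct, e2, neg_dotProduct, e1]
    ring
  have hn1 : 0 ≤ (-(H *ᵥ u)) ⬝ᵥ (Γn⁻¹ *ᵥ (-(H *ᵥ u))) := psd_inv_nonneg Γn hΓn _
  have hn2 : 0 ≤ (u - X *ᵥ v) ⬝ᵥ (Γ⁻¹ *ᵥ (u - X *ᵥ v)) := psd_inv_nonneg Γ hΓ _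
  simp only [dotProduct_zero, zero_dotProduct, mul_zero, add_zero]
  nlinarith [hcross, hn1, hn2]
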